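/- arXiv:1111.2902 — 2 statements merged into one kernel-verified Lean document; each statement's English description precedes it below -/
import Mathlib

section
/- Let (R,m,k) be a commutative Noetherian local ring and M a finitely generated R-module with pd_R M = 1, locally free on the punctured spectrum. Let σ be a nonzero socle element of Ext^1_R(M,R), represented by an extension 0 → R → N → M → 0. Then there is a short exact sequence 0 → k → Ext^1_R(M,R) → Ext^1_R(N,R) → 0; in particular length(Ext^1_R(N,R)) = length(Ext^1_R(M,R)) − 1. -/
open CategoryTheory IsLocalRing

universe u

section Prelim

variable (R : Type u) [CommRing R]

/-- The depth of a module over a local ring: the supremum of the lengths of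
(weakly) regular sequences on `M` consisting of elements of the maximal ideal. -/
noncomputable def mdepth [IsLocalRing R] (M : Type u) [AddCommGroup M] [Module R M] : ℕ∞ :=
  sSup {n : ℕ∞ | ∃ rs : List R, (rs.length : ℕ∞) = n ∧ (∀ r ∈ rs, r ∈ maximalIdeal R) ∧
    RingTheory.Sequence.IsWeaklyRegular M rs}

/-- A short exact sequence `0 → L → M → N → 0` of `R`-modules. -/
def SES (L M N : ModuleCat.{u} R) : Prop :=
  ∃ (f : L →ₗ[R] M) (g : M →ₗ[R] N),
    Function.Injective f ∧ Function.Surjective g ∧ LinearMap.ker g = LinearMap.range f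

/-- `N` is a direct summand of `M`. -/
def IsSummand (N M : ModuleCat.{u} R) : Prop :=
  ∃ (i : N →ₗ[R] M) (p : M →ₗ[R] N), p.comp i = LinearMap.id

/-- `N` is a (minimal) first syzygy of `M`: the kernel of a minimal free cover of `M`. -/
def IsSyzygy (M N : ModuleCat.{u} R) : Prop :=
  ∃ (n : ℕ) (f : (Fin n → R) →ₗ[R] M), Function.Surjective f ∧
    LinearMap.ker f ≤ ((⊥ : Ideal R).jacobson) • (⊤ : Submodule R (Fin n → R)) ∧
    Nonempty (N ≃ₗ[R] LinearMap.ker f)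

/-- `N` is an `n`-th (minimal) syzygy of `M`. -/
def IsNSyzygy : ℕ → ModuleCat.{u} R → ModuleCat.{u} R → Prop
  | 0, M, N => Nonempty (N ≃ₗ[R] M)
  | n + 1, M, N => ∃ K : ModuleCat.{u} R, IsSyzygy R M K ∧ IsNSyzygy n K N

/-- The additive closure of a class of modules: closure under finite direct sums
and direct summands. -/
inductive AddClosure (T : Set (ModuleCat.{u} R)) : ModuleCat.{u} R → Prop
  | of {M : ModuleCat.{u} R} : M ∈ T → AddClosure T M
  | prod {M N : ModuleCat.{u} R} : AddClosure T M → AddClosure T N →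
      AddClosure T (ModuleCat.of R (M × N))
  | summand {M N : ModuleCat.{u} R} : AddClosure T M → IsSummand R N M → AddClosure T N

/-- `[X]`: the additive closure of `{R} ∪ {Ω^i X : i ≥ 0, X ∈ X}`. -/
def bracket (X : Set (ModuleCat.{u} R)) : Set (ModuleCat.{u} R) :=
  {M | AddClosure R (insert (ModuleCat.of R R)
    {N | ∃ M₀ ∈ X, ∃ i : ℕ, IsNSyzygy R i M₀ N}) M}

/-- `X ∘ Y`: modules `M` fitting in an exact sequence `0 → X → M → Y → 0`. -/
def circOp (X Y : Set (ModuleCat.{u} R)) : Set (ModuleCat.{u} R) :=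
  {M | ∃ X₀ ∈ X, ∃ Y₀ ∈ Y, SES R X₀ M Y₀}

/-- `X • Y = [[X] ∘ [Y]]`. -/
def bull (X Y : Set (ModuleCat.{u} R)) : Set (ModuleCat.{u} R) :=
  bracket R (circOp R (bracket R X) (bracket R Y))

/-- The ball `[C]_r` of radius `r` centered at `C`. -/
def ball (C : ModuleCat.{u} R) : ℕ → Set (ModuleCat.{u} R)
  | 0 => ∅
  | 1 => bracket R {C}
  | r + 2 => bracket R (circOp R (ball C (r + 1)) (bracket R {C}))

/-- A resolving subcategory of `mod R`. -/
def IsResolving (X : Set (ModuleCat.{u} R)) : Prop :=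
  (∀ M ∈ X, Module.Finite R M) ∧
  (ModuleCat.of R R ∈ X) ∧
  (∀ M ∈ X, ∀ N : ModuleCat.{u} R, IsSummand R N M → N ∈ X) ∧
  (∀ L M N : ModuleCat.{u} R, SES R L M N → L ∈ X → N ∈ X → M ∈ X) ∧
  (∀ L M N : ModuleCat.{u} R, SES R L M N → M ∈ X → N ∈ X → L ∈ X)

end Prelim

section Prelim2

variable (R : Type u) [CommRing R]

/-- The Ext module `Ext^n_R(M, N)`. -/
noncomputable def extM (M N : ModuleCat.{u} R) (n : ℕ) : ModuleCat.{u} R :=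
  ((Ext R (ModuleCat.{u} R) n).obj (Opposite.op M)).obj N

/-- A finitely generated module `M` is totally reflexive if `M → M**` is bijective and
`Ext^i(M, R) = 0 = Ext^i(M*, R)` for all `i > 0`. -/
def TotallyReflexive (M : Type u) [AddCommGroup M] [Module R M] : Prop :=
  Module.Finite R M ∧
  Function.Bijective (Module.Dual.eval R M) ∧
  (∀ i : ℕ, 0 < i →
    Subsingleton (extM R (ModuleCat.of R M) (ModuleCat.of R R) i)) ∧
  (∀ i : ℕ, 0 < i →
    Subsingleton (extM R (ModuleCat.of R (Module.Dual R M)) (ModuleCat.of R R) i))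

/-- `C` is a first cosyzygy `Ω⁻¹M` of `M`: the `R`-dual of a minimal first syzygy of `M*`. -/
def IsCosyzygy (M : Type u) [AddCommGroup M] [Module R M] (C : ModuleCat.{u} R) : Prop :=
  ∃ K : ModuleCat.{u} R, IsSyzygy R (ModuleCat.of R (Module.Dual R M)) K ∧
    Nonempty (C ≃ₗ[R] Module.Dual R K)

/-- `T` is the Auslander transpose of `M`: the cokernel of the dual of the first map
in a minimal free presentation of `M`. -/
def IsTranspose (M T : ModuleCat.{u} R) : Prop :=
  ∃ (n₀ n₁ : ℕ) (d : (Fin n₁ → R) →ₗ[R] (Fin n₀ → R)) (p : (Fin n₀ → R) →ₗ[R] M),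
    Function.Surjective p ∧ LinearMap.ker p = LinearMap.range d ∧
    LinearMap.ker p ≤ ((⊥ : Ideal R).jacobson) • (⊤ : Submodule R (Fin n₀ → R)) ∧
    LinearMap.ker d ≤ ((⊥ : Ideal R).jacobson) • (⊤ : Submodule R (Fin n₁ → R)) ∧
    Nonempty (T ≃ₗ[R] (Module.Dual R (Fin n₁ → R) ⧸ LinearMap.range d.dualMap))

/-- The `I`-torsion submodule `Γ_I(M)`. -/
def torsSub (I : Ideal R) (M : Type u) [AddCommGroup M] [Module R M] : Submodule R M :=
  ⨆ n : ℕ, Submodule.torsionBySet R M ((I ^ n : Ideal R) : Set R)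

/-- A Noetherian local ring is Gorenstein iff it has finite self-injective dimension,
iff `Ext^i(k, R) = 0` for all sufficiently large `i`. -/
def IsGorensteinLocal [IsLocalRing R] : Prop :=
  ∃ n : ℕ, ∀ i : ℕ, n < i →
    Subsingleton (extM R (ModuleCat.of R (ResidueField R)) (ModuleCat.of R R) i)

/-- A maximal Cohen-Macaulay module: finitely generated with depth equal to `dim R`. -/
def IsMCM [IsLocalRing R] (M : ModuleCat.{u} R) : Prop :=
  Module.Finite R M ∧ ((mdepth R M : ℕ∞) : WithBot ℕ∞) = ringKrullDim R

/-- `X` is a thick subcategory of `G`: closed under direct summands and two-out-of-three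
for short exact sequences with all terms in `G`. -/
def IsThickIn (G X : Set (ModuleCat.{u} R)) : Prop :=
  X ⊆ G ∧ (∀ M ∈ X, ∀ N : ModuleCat.{u} R, IsSummand R N M → N ∈ X) ∧
  (∀ L M N : ModuleCat.{u} R, L ∈ G → M ∈ G → N ∈ G → SES R L M N →
    ((L ∈ X ∧ M ∈ X) → N ∈ X) ∧ ((L ∈ X ∧ N ∈ X) → M ∈ X) ∧ ((M ∈ X ∧ N ∈ X) → L ∈ X))

/-- The resolving closure `res M`: the smallest resolving subcategory containing `M`. -/
def resClosure (M : ModuleCat.{u} R) : Set (ModuleCat.{u} R) :=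
  ⋂₀ {X | IsResolving R X ∧ M ∈ X}

/-- The ball `|G|_r` (no syzygies, no free modules added). -/
def pball (G : ModuleCat.{u} R) : ℕ → Set (ModuleCat.{u} R)
  | 0 => ∅
  | 1 => {M | AddClosure R {G} M}
  | r + 2 => {M | AddClosure R
      (circOp R (pball G (r + 1)) {N | AddClosure R {G} N}) M}

/-- An indecomposable module. -/
def Indecomp (M : ModuleCat.{u} R) : Prop :=
  ¬ Subsingleton M ∧ ∀ A B : Submodule R M, IsCompl A B → A = ⊥ ∨ B = ⊥

/-- `N` is the kernel of some surjection from a finite free module onto `M`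
(a not-necessarily-minimal syzygy). -/
def IsGSyzygy (M N : ModuleCat.{u} R) : Prop :=
  ∃ (n : ℕ) (f : (Fin n → R) →ₗ[R] M), Function.Surjective f ∧
    Nonempty (N ≃ₗ[R] LinearMap.ker f)

/-- `N` is an `n`-fold (not-necessarily-minimal) syzygy of `M`. -/
def IsGNSyzygy : ℕ → ModuleCat.{u} R → ModuleCat.{u} R → Prop
  | 0, M, N => Nonempty (N ≃ₗ[R] M)
  | n + 1, M, N => ∃ K : ModuleCat.{u} R, IsGSyzygy R M K ∧ IsGNSyzygy n K N

/-- Projective dimension at most `n`. -/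
def PdLE (n : ℕ) (M : ModuleCat.{u} R) : Prop :=
  ∃ N : ModuleCat.{u} R, IsGNSyzygy R n M N ∧ Module.Projective R N

/-- Projective dimension, as an element of `ℕ∞`. -/
noncomputable def pdim (M : ModuleCat.{u} R) : ℕ∞ :=
  sInf {n : ℕ∞ | ∃ m : ℕ, (m : ℕ∞) = n ∧ PdLE R m M}

end Prelim2

private lemma factor_inj {R : Type u} [CommRing R] {A B C : Type u}
    [AddCommGroup A] [Module R A] [AddCommGroup B] [Module R B]
    [AddCommGroup C] [Module R C]
    (f : A →ₗ[R] C) (g : B →ₗ[R] C) (hg : Function.Injective g)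
    (h : ∀ a, f a ∈ LinearMap.range g) :
    ∃ h' : A →ₗ[R] B, g.comp h' = f := by
  refine ⟨(LinearEquiv.ofInjective g hg).symm.toLinearMap.comp
    (f.codRestrict (LinearMap.range g) h), ?_⟩
  ext a
  have h1 : ∀ x : LinearMap.range g, g ((LinearEquiv.ofInjective g hg).symm x) = x := by
    intro x
    conv_lhs => rw [← LinearEquiv.ofInjective_apply g (h := hg)]
    rw [LinearEquiv.apply_symm_apply]
  exact h1 ⟨f a, h a⟩

set_option maxHeartbeats 1000000 in
/-- Let `(R,m,k)` be Noetherian local, `M` finitely generated with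
`pd_R M = 1` (witnessed by a free resolution `0 → F₁ →d F₀ →p M → 0`, `M` not
projective), locally free on the punctured spectrum. Let `σ = [φ]` be a nonzero socle
element of `Ext¹_R(M,R) = coker(d*)`, represented by an extension `0 → R →ι N →π M → 0`
(via the pushout map `ρ`). Then there is a short exact sequence
`0 → k → Ext¹_R(M,R) → Ext¹_R(N,R) → 0`, where `Ext¹_R(N,R)` is computed from any free
resolution `0 → G₁ →e G₀ →q N → 0`. -/
theorem socle_extension_ext_exact_sequence
    (R : Type u) [CommRing R] [IsNoetherianRing R] [IsLocalRing R]
    (M : Type u) [AddCommGroup M] [Module R M] [Module.Finite R M]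
    (n₀ n₁ : ℕ) (d : (Fin n₁ → R) →ₗ[R] (Fin n₀ → R)) (p : (Fin n₀ → R) →ₗ[R] M)
    (hd : Function.Injective d) (hp : Function.Surjective p)
    (hdp : LinearMap.ker p = LinearMap.range d)
    (hnotproj : ¬ Module.Projective R M)
    (hloc : ∀ (P : Ideal R) [P.IsPrime], P ≠ maximalIdeal R →
      Module.Free (Localization.AtPrime P) (LocalizedModule P.primeCompl M))
    (φ : Module.Dual R (Fin n₁ → R))
    (hσ_ne : (Submodule.Quotient.mk φ :
      Module.Dual R (Fin n₁ → R) ⧸ LinearMap.range d.dualMap) ≠ 0)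
    (hσ_socle : ∀ a ∈ maximalIdeal R, a • (Submodule.Quotient.mk φ :
      Module.Dual R (Fin n₁ → R) ⧸ LinearMap.range d.dualMap) = 0)
    (N : Type u) [AddCommGroup N] [Module R N]
    (ι : R →ₗ[R] N) (π : N →ₗ[R] M)
    (hι : Function.Injective ι) (hπ : Function.Surjective π)
    (hιπ : LinearMap.ker π = LinearMap.range ι)
    (ρ : (Fin n₀ → R) →ₗ[R] N)
    (hρp : π.comp ρ = p) (hρd : ρ.comp d = ι.comp φ) :
    ∀ (m₀ m₁ : ℕ) (e : (Fin m₁ → R) →ₗ[R] (Fin m₀ → R)) (q : (Fin m₀ → R) →ₗ[R] N),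
      Function.Injective e → Function.Surjective q →
      LinearMap.ker q = LinearMap.range e →
      ∃ (F : ResidueField R →ₗ[R]
          (Module.Dual R (Fin n₁ → R) ⧸ LinearMap.range d.dualMap))
        (G : (Module.Dual R (Fin n₁ → R) ⧸ LinearMap.range d.dualMap) →ₗ[R]
          (Module.Dual R (Fin m₁ → R) ⧸ LinearMap.range e.dualMap)),
        Function.Injective F ∧ Function.Surjective G ∧
        LinearMap.ker G = LinearMap.range F := by
  intro m₀ m₁ e q he hq hqe
  classical
  -- horseshoe resolution of N: 0 → F₁ → R × F₀ → N → 0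
  set q' : (R × (Fin n₀ → R)) →ₗ[R] N := ι.coprod ρ with hq'def
  set e' : (Fin n₁ → R) →ₗ[R] (R × (Fin n₀ → R)) := (-φ).prod d with he'def
  have hπι : ∀ r, π (ι r) = 0 := fun r =>
    LinearMap.mem_ker.mp (hιπ.ge ⟨r, rfl⟩)
  have he' : Function.Injective e' := by
    intro x y hxy
    exact hd (congrArg Prod.snd hxy)
  have hq'e' : ∀ y, q' (e' y) = 0 := by
    intro y
    have h1 : ρ (d y) = ι (φ y) := LinearMap.congr_fun hρd y
    simp [hq'def, he'def, h1]
  have hkq' : ∀ z : R × (Fin n₀ → R), q' z = 0 → z ∈ LinearMap.range e' := by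
    rintro ⟨r, x⟩ hz
    have hz' : ι r + ρ x = 0 := hz
    have hpx : p x = 0 := by
      have := congrArg π hz'
      have h1 : π (ρ x) = p x := LinearMap.congr_fun hρp x
      simpa [hπι, h1] using this
    obtain ⟨y, hy⟩ : x ∈ LinearMap.range d := hdp ▸ LinearMap.mem_ker.mpr hpx
    have h1 : ρ (d y) = ι (φ y) := LinearMap.congr_fun hρd y
    have hr : r = -φ y := by
      apply hι
      have : ι r + ι (φ y) = 0 := by rw [← h1, hy]; exact hz'
      have := eq_neg_of_add_eq_zero_left this
      simpa using this
    exact ⟨y, by simp [he'def, hr, hy]⟩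
  have hq's : Function.Surjective q' := by
    intro n
    obtain ⟨x, hx⟩ := hp (π n)
    have : π (n - ρ x) = 0 := by
      have h1 : π (ρ x) = p x := LinearMap.congr_fun hρp x
      simp [h1, hx]
    obtain ⟨r, hr⟩ : n - ρ x ∈ LinearMap.range ι := hιπ ▸ LinearMap.mem_ker.mpr this
    exact ⟨(r, x), by simp [hq'def, hr]⟩
  -- comparison maps between the two resolutions of N
  obtain ⟨u₀, hu₀⟩ := Module.projective_lifting_property q' q hq's
  obtain ⟨v₀, hv₀⟩ := Module.projective_lifting_property q q' hq
  obtain ⟨u₁, hu₁⟩ := factor_inj (u₀.comp e) e' he' (fun x => by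
    apply hkq'
    have h1 : q' (u₀ (e x)) = q (e x) := LinearMap.congr_fun hu₀ (e x)
    have h2 : q (e x) = 0 := LinearMap.mem_ker.mp (hqe.ge ⟨x, rfl⟩)
    simpa [h2] using h1)
  obtain ⟨v₁, hv₁⟩ := factor_inj (v₀.comp e') e he (fun y => by
    rw [← hqe]
    have h1 : q (v₀ (e' y)) = q' (e' y) := LinearMap.congr_fun hv₀ (e' y)
    exact LinearMap.mem_ker.mpr (by simpa [hq'e' y] using h1))
  -- homotopies
  obtain ⟨s, hs⟩ := factor_inj ((v₀.comp u₀) - LinearMap.id) e he (fun x => by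
    rw [← hqe]
    refine LinearMap.mem_ker.mpr ?_
    have h1 : q (v₀ (u₀ x)) = q' (u₀ x) := LinearMap.congr_fun hv₀ (u₀ x)
    have h2 : q' (u₀ x) = q x := LinearMap.congr_fun hu₀ x
    simp [h1, h2])
  obtain ⟨t, ht⟩ := factor_inj ((u₀.comp v₀) - LinearMap.id) e' he' (fun z => by
    apply hkq'
    have h1 : q' (u₀ (v₀ z)) = q (v₀ z) := LinearMap.congr_fun hu₀ (v₀ z)
    have h2 : q (v₀ z) = q' z := LinearMap.congr_fun hv₀ z
    simp [h1, h2])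
  have hvu : ∀ x, v₁ (u₁ x) = x + s (e x) := by
    intro x
    apply he
    have h1 : e (v₁ (u₁ x)) = v₀ (e' (u₁ x)) := LinearMap.congr_fun hv₁ (u₁ x)
    have h2 : e' (u₁ x) = u₀ (e x) := LinearMap.congr_fun hu₁ x
    have h3 : e (s (e x)) = v₀ (u₀ (e x)) - e x := by
      have := LinearMap.congr_fun hs (e x)
      simpa using this
    rw [h1, h2, map_add, h3]
    abel
  have huv : ∀ y, u₁ (v₁ y) = y + t (e' y) := by
    intro y
    apply he'
    have h1 : e' (u₁ (v₁ y)) = u₀ (e (v₁ y)) := LinearMap.congr_fun hu₁ (v₁ y)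
    have h2 : e (v₁ y) = v₀ (e' y) := LinearMap.congr_fun hv₁ y
    have h3 : e' (t (e' y)) = u₀ (v₀ (e' y)) - e' y := by
      have := LinearMap.congr_fun ht (e' y)
      simpa using this
    rw [h1, h2, map_add, h3]
    abel
  -- components of u₀ and the key identities
  set a : (Fin m₀ → R) →ₗ[R] R := (LinearMap.fst R R (Fin n₀ → R)).comp u₀ with hadef
  set b : (Fin m₀ → R) →ₗ[R] (Fin n₀ → R) := (LinearMap.snd R R (Fin n₀ → R)).comp u₀
    with hbdef
  have hA : ∀ x, φ (u₁ x) = -(a (e x)) := by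
    intro x
    have h2 : e' (u₁ x) = u₀ (e x) := LinearMap.congr_fun hu₁ x
    have h3 : -φ (u₁ x) = (u₀ (e x)).1 := by rw [← h2]; simp [he'def]
    rw [hadef]
    simp only [LinearMap.comp_apply, LinearMap.fst_apply]
    rw [← h3, neg_neg]
  have hB : ∀ x, d (u₁ x) = b (e x) := by
    intro x
    have h2 : e' (u₁ x) = u₀ (e x) := LinearMap.congr_fun hu₁ x
    have h3 : d (u₁ x) = (u₀ (e x)).2 := by rw [← h2]; simp [he'def]
    rw [hbdef]
    simp only [LinearMap.comp_apply, LinearMap.snd_apply]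
    exact h3
  -- the maps F and G
  set σq : Module.Dual R (Fin n₁ → R) ⧸ LinearMap.range d.dualMap :=
    Submodule.Quotient.mk φ with hσq
  have hGcond : LinearMap.range d.dualMap ≤
      (LinearMap.range e.dualMap).comap u₁.dualMap := by
    rintro _ ⟨α, rfl⟩
    refine Submodule.mem_comap.mpr ⟨α.comp b, ?_⟩
    apply LinearMap.ext
    intro x
    simp only [LinearMap.dualMap_apply, LinearMap.comp_apply]
    rw [hB x]
  refine ⟨Submodule.liftQ (maximalIdeal R)
      (LinearMap.toSpanSingleton R _ σq)
      (fun r hr => LinearMap.mem_ker.mpr (by simpa using hσ_socle r hr)),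
    Submodule.mapQ _ _ u₁.dualMap hGcond, ?_, ?_, ?_⟩
  · -- F injective
    show Function.Injective (Submodule.liftQ (maximalIdeal R) (LinearMap.toSpanSingleton R _ σq)
      (fun r hr => LinearMap.mem_ker.mpr (by simpa using hσ_socle r hr)))
    rw [← LinearMap.ker_eq_bot, eq_bot_iff]
    intro x hx
    obtain ⟨r, rfl⟩ := Submodule.Quotient.mk_surjective _ x
    have hx' : r • σq = 0 := LinearMap.mem_ker.mp hx
    by_cases hr : r ∈ maximalIdeal R
    · exact (Submodule.mem_bot R).mpr ((Submodule.Quotient.mk_eq_zero _).mpr hr)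
    · exfalso
      have hru : IsUnit r := by
        by_contra hnu
        exact hr (IsLocalRing.mem_maximalIdeal r |>.mpr hnu)
      obtain ⟨u, rfl⟩ := hru
      apply hσ_ne
      have : (↑u⁻¹ : R) • ((u : R) • σq) = 0 := by rw [hx']; simp
      rwa [smul_smul, Units.inv_mul, one_smul] at this
  · -- G surjective
    intro y
    obtain ⟨β, rfl⟩ := Submodule.Quotient.mk_surjective _ y
    refine ⟨Submodule.Quotient.mk (v₁.dualMap β), ?_⟩
    rw [Submodule.mapQ_apply, Submodule.Quotient.eq]
    refine ⟨β.comp s, ?_⟩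
    apply LinearMap.ext
    intro x
    simp only [LinearMap.dualMap_apply, LinearMap.comp_apply, LinearMap.sub_apply]
    rw [hvu x, map_add]
    abel
  · -- ker G = range F
    apply le_antisymm
    · -- ker G ≤ range F
      intro z hz
      obtain ⟨ψ, rfl⟩ := Submodule.Quotient.mk_surjective _ z
      have hz' : u₁.dualMap ψ ∈ LinearMap.range e.dualMap := by
        rw [← Submodule.Quotient.mk_eq_zero]
        have h0 := LinearMap.mem_ker.mp hz
        rwa [Submodule.mapQ_apply] at h0
      obtain ⟨β, hβ⟩ := hz'
      set γ : Module.Dual R (R × (Fin n₀ → R)) := β.comp v₀ - ψ.comp t with hγdef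
      have key : ψ = (-(γ (1, 0))) • φ +
          d.dualMap (γ.comp (LinearMap.inr R R (Fin n₀ → R))) := by
        apply LinearMap.ext
        intro y
        have h1 : ψ (u₁ (v₁ y)) = β (e (v₁ y)) := by
          have := LinearMap.congr_fun hβ (v₁ y)
          rw [LinearMap.dualMap_apply, LinearMap.dualMap_apply] at this
          exact this.symm
        have h2 : e (v₁ y) = v₀ (e' y) := LinearMap.congr_fun hv₁ y
        have h3 : ψ y = γ (e' y) := by
          have h4 : ψ (u₁ (v₁ y)) = ψ y + ψ (t (e' y)) := by rw [huv y, map_add]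
          rw [h1, h2] at h4
          simp only [hγdef, LinearMap.sub_apply, LinearMap.comp_apply]
          rw [h4]
          abel
        have h5 : e' y = (-(φ y)) • ((1 : R), (0 : Fin n₀ → R)) + ((0 : R), d y) := by
          rw [he'def]
          refine Prod.ext ?_ ?_ <;> simp
        rw [h3, h5, map_add, map_smul]
        simp only [LinearMap.add_apply, LinearMap.smul_apply, LinearMap.dualMap_apply,
          LinearMap.comp_apply, LinearMap.inr_apply, smul_eq_mul, LinearMap.neg_apply]
        ring
      refine ⟨Submodule.Quotient.mk (-(γ (1, 0))), ?_⟩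
      show (-(γ (1, 0))) • σq = Submodule.Quotient.mk ψ
      rw [hσq, ← Submodule.Quotient.mk_smul, Submodule.Quotient.eq]
      refine ⟨-(γ.comp (LinearMap.inr R R (Fin n₀ → R))), ?_⟩
      rw [key]
      simp only [map_neg]
      abel
    · -- range F ≤ ker G
      rintro _ ⟨y, rfl⟩
      refine LinearMap.mem_ker.mpr ?_
      obtain ⟨r, rfl⟩ := Submodule.Quotient.mk_surjective _ y
      show Submodule.mapQ _ _ u₁.dualMap hGcond (r • σq) = 0
      rw [map_smul]
      have hGσ : Submodule.mapQ _ _ u₁.dualMap hGcond σq = 0 := by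
        rw [hσq, Submodule.mapQ_apply, Submodule.Quotient.mk_eq_zero]
        refine ⟨-a, ?_⟩
        apply LinearMap.ext
        intro x
        simp only [LinearMap.dualMap_apply, LinearMap.neg_apply]
        rw [hA x]
      rw [hGσ, smul_zero]
end

section
/- Let R be a commutative Noetherian local ring and X a resolving subcategory of mod R contained in the category G(R) of totally reflexive modules. If X is closed under R-duals (M ∈ X implies M* = Hom_R(M,R) ∈ X), then X is closed under cosyzygies, and hence X is a thick subcategory of G(R). -/
open CategoryTheory IsLocalRing

universe u

section Aux
variable {R : Type u} [CommRing R]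

/-- Descend a linear map along a surjection whose kernel it kills. -/
noncomputable def descendAux {A B C' : Type u} [AddCommGroup A] [Module R A]
    [AddCommGroup B] [Module R B] [AddCommGroup C'] [Module R C']
    (s : A →ₗ[R] B) (c : A →ₗ[R] C') (hs : Function.Surjective s)
    (h : LinearMap.ker s ≤ LinearMap.ker c) : B →ₗ[R] C' where
  toFun b := c (Function.surjInv hs b)
  map_add' b₁ b₂ := by
    have key : ∀ x y : A, s x = s y → c x = c y := by
      intro x y hxy
      have : x - y ∈ LinearMap.ker s := by simp [LinearMap.mem_ker, hxy]
      have := h this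
      rw [LinearMap.mem_ker, map_sub, sub_eq_zero] at this
      exact this
    have : s (Function.surjInv hs (b₁ + b₂)) =
        s (Function.surjInv hs b₁ + Function.surjInv hs b₂) := by
      simp [Function.surjInv_eq hs]
    show c _ = c _ + c _
    rw [key _ _ this, map_add]
  map_smul' r b := by
    have key : ∀ x y : A, s x = s y → c x = c y := by
      intro x y hxy
      have : x - y ∈ LinearMap.ker s := by simp [LinearMap.mem_ker, hxy]
      have := h this
      rw [LinearMap.mem_ker, map_sub, sub_eq_zero] at this
      exact this
    have : s (Function.surjInv hs (r • b)) = s (r • Function.surjInv hs b) := by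
      simp [Function.surjInv_eq hs]
    show c _ = (RingHom.id R) r • c _
    rw [key _ _ this, map_smul]
    rfl

lemma descendAux_apply {A B C' : Type u} [AddCommGroup A] [Module R A]
    [AddCommGroup B] [Module R B] [AddCommGroup C'] [Module R C']
    (s : A →ₗ[R] B) (c : A →ₗ[R] C') (hs : Function.Surjective s)
    (h : LinearMap.ker s ≤ LinearMap.ker c) (a : A) :
    descendAux s c hs h (s a) = c a := by
  have key : ∀ x y : A, s x = s y → c x = c y := by
    intro x y hxy
    have : x - y ∈ LinearMap.ker s := by simp [LinearMap.mem_ker, hxy]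
    have := h this
    rw [LinearMap.mem_ker, map_sub, sub_eq_zero] at this
    exact this
  exact key _ _ (Function.surjInv_eq hs (s a))

end Aux

section ExtLift
variable {R : Type u} [CommRing R]

lemma ext_lift {L M N : ModuleCat.{u} R}
    (f : ↥L →ₗ[R] ↥M) (g : ↥M →ₗ[R] ↥N) (hf : Function.Injective f)
    (hg : Function.Surjective g) (hker : LinearMap.ker g = LinearMap.range f)
    (hext : Subsingleton (((Ext R (ModuleCat.{u} R) 1).obj (Opposite.op N)).obj
      (ModuleCat.of R R)))
    (φ : ↥L →ₗ[R] R) : ∃ Φ : ↥M →ₗ[R] R, Φ.comp f = φ := by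
  classical
  obtain ⟨P⟩ := (HasProjectiveResolution.out (Z := N))
  -- exactness of the dualized resolution in degree 1
  haveI := hext
  have hsub : Subsingleton ((P.complex.linearYonedaObj R (ModuleCat.of R R)).homology 1) :=
    ((P.isoExt (R := R) 1 (ModuleCat.of R R)).toLinearEquiv.symm.toEquiv).subsingleton
  have hexact : (P.complex.linearYonedaObj R (ModuleCat.of R R)).ExactAt 1 := by
    rw [HomologicalComplex.exactAt_iff_isZero_homology]
    exact @ModuleCat.isZero_of_subsingleton _ _ _ hsub
  rw [(P.complex.linearYonedaObj R (ModuleCat.of R R)).exactAt_iff' 0 1 2 (by simp) (by simp),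
    ShortComplex.moduleCat_exact_iff] at hexact
  simp only [HomologicalComplex.shortComplexFunctor'_obj_f, HomologicalComplex.shortComplexFunctor'_obj_g, HomologicalComplex.shortComplexFunctor'_obj_X₂,
    ChainComplex.linearYonedaObj_d] at hexact
  -- set up lifts
  let gc : M ⟶ N := ModuleCat.ofHom g
  haveI : Epi gc := (ModuleCat.epi_iff_surjective gc).2 hg
  let ε : P.complex.X 0 ⟶ N := P.π.f 0
  let lift₀ : P.complex.X 0 ⟶ M := Projective.factorThru ε gc
  have hlift : ∀ x, g (lift₀ x) = ε x := by
    intro x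
    have := Projective.factorThru_comp ε gc
    calc g (lift₀ x) = (lift₀ ≫ gc) x := rfl
      _ = ε x := by rw [this]
  have hεsurj : Function.Surjective ε :=
    (ModuleCat.epi_iff_surjective (P.π.f 0)).1 inferInstance
  have hε0 : ∀ y, ε (P.complex.d 1 0 y) = 0 := by
    intro y
    have := P.complex_d_comp_π_f_zero
    calc ε (P.complex.d 1 0 y) = (P.complex.d 1 0 ≫ ε) y := rfl
      _ = 0 := by rw [show P.complex.d 1 0 ≫ ε = 0 from this]; rfl
  have hker0 : ∀ x, ε x = 0 → ∃ y, P.complex.d 1 0 y = x := by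
    have h0 := P.exact₀
    rw [ShortComplex.moduleCat_exact_iff] at h0
    exact h0
  -- ψ : P₁ → L lifting lift₀ ∘ d₁ through f
  have hmem : ∀ y, lift₀ (P.complex.d 1 0 y) ∈ LinearMap.range f := by
    intro y
    rw [← hker, LinearMap.mem_ker, hlift]
    exact hε0 y
  let eL := LinearEquiv.ofInjective f hf
  have hcoe : ∀ x : ↥L, ((eL x : LinearMap.range f) : ↥M) = f x := fun x => rfl
  let ψ : ↥(P.complex.X 1) →ₗ[R] ↥L :=
    eL.symm.toLinearMap ∘ₗ LinearMap.codRestrict (LinearMap.range f)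
      (lift₀.hom ∘ₗ (P.complex.d 1 0).hom) hmem
  have hψ : ∀ y, f (ψ y) = lift₀ (P.complex.d 1 0 y) := by
    intro y
    show f (eL.symm ⟨lift₀ (P.complex.d 1 0 y), hmem y⟩) = _
    rw [← hcoe, eL.apply_symm_apply]
  have hψd : ∀ z, ψ (P.complex.d 2 1 z) = 0 := by
    intro z
    apply hf
    rw [hψ, map_zero]
    have h21 : P.complex.d 2 1 ≫ P.complex.d 1 0 = 0 := P.complex.d_comp_d 2 1 0
    calc lift₀ (P.complex.d 1 0 (P.complex.d 2 1 z))
        = lift₀ ((P.complex.d 2 1 ≫ P.complex.d 1 0) z) := rfl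
      _ = lift₀ 0 := by rw [h21]; rfl
      _ = 0 := map_zero _
  -- the cocycle φ ∘ ψ is a coboundary
  obtain ⟨θ, hθ⟩ := hexact (ModuleCat.ofHom (φ ∘ₗ ψ)) (by
    apply ModuleCat.hom_ext
    apply LinearMap.ext
    intro z
    show φ (ψ (P.complex.d 2 1 z)) = 0
    rw [hψd, map_zero])
  let θ' : ↥(P.complex.X 0) →ₗ[R] R := θ.hom
  have hθ' : ∀ y, θ' (P.complex.d 1 0 y) = φ (ψ y) := by
    intro y
    have h2 : ((P.complex.d 1 0 ≫ (θ : P.complex.X 0 ⟶ ModuleCat.of R R)).hom :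
        ↥(P.complex.X 1) →ₗ[R] R) = φ ∘ₗ ψ := congrArg ModuleCat.Hom.hom hθ
    exact DFunLike.congr_fun h2 y
  -- descend φ ⊕ θ along (l, x) ↦ f l + lift₀ x
  let s : (↥L × ↥(P.complex.X 0)) →ₗ[R] ↥M :=
    f.coprod lift₀.hom
  have hssurj : Function.Surjective s := by
    intro m
    obtain ⟨x, hx⟩ := hεsurj (g m)
    have h1 : g (m - lift₀ x) = 0 := by rw [map_sub, hlift, hx, sub_self]
    have h2 : m - lift₀ x ∈ LinearMap.range f := by rw [← hker]; exact h1
    obtain ⟨l, hl⟩ := h2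
    refine ⟨(l, x), ?_⟩
    show f l + lift₀ x = m
    rw [hl]; abel
  let c : (↥L × ↥(P.complex.X 0)) →ₗ[R] R :=
    φ.coprod θ'
  have hkerc : LinearMap.ker s ≤ LinearMap.ker c := by
    rintro ⟨l, x⟩ h
    rw [LinearMap.mem_ker] at h ⊢
    have h' : f l + lift₀ x = 0 := h
    have hεx : ε x = 0 := by
      have h1 : g (f l + lift₀ x) = 0 := by rw [h', map_zero]
      have hgf : g (f l) = 0 := by
        have : f l ∈ LinearMap.range f := ⟨l, rfl⟩
        rw [← hker] at this; exact this
      rw [map_add, hlift, hgf, zero_add] at h1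
      exact h1
    obtain ⟨y, hy⟩ := hker0 x hεx
    have hfl : f l = f (- ψ y) := by
      rw [map_neg, hψ, hy]
      exact eq_neg_of_add_eq_zero_left h'
    have hl : l = - ψ y := hf hfl
    show φ l + θ' x = 0
    rw [hl, ← hy, hθ' y, map_neg, neg_add_cancel]
  refine ⟨descendAux s c hssurj hkerc, ?_⟩
  apply LinearMap.ext
  intro l
  have : f l = s (l, 0) := by
    show f l = f l + lift₀ 0
    rw [map_zero, add_zero]
  show descendAux s c hssurj hkerc (f l) = φ l
  rw [this, descendAux_apply]
  show φ l + θ' 0 = φ l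
  rw [map_zero, add_zero]

end ExtLift

section MainAux
variable {R : Type u} [CommRing R]

lemma mem_of_linearEquiv (X : Set (ModuleCat.{u} R))
    (hsum : ∀ M ∈ X, ∀ N : ModuleCat.{u} R, IsSummand R N M → N ∈ X)
    {A B : ModuleCat.{u} R} (hA : A ∈ X) (e : ↥B ≃ₗ[R] ↥A) : B ∈ X :=
  hsum A hA B ⟨e.toLinearMap, e.symm.toLinearMap, by ext x; simp⟩

lemma free_mem (X : Set (ModuleCat.{u} R)) (hres : IsResolving R X) :
    ∀ n : ℕ, ModuleCat.of R (Fin n → R) ∈ X := by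
  obtain ⟨-, hR, hsum, hext2, -⟩ := hres
  intro n
  induction n with
  | zero =>
    refine hsum _ hR (ModuleCat.of R (Fin 0 → R)) ⟨0, 0, ?_⟩
    ext x i
    exact Fin.elim0 i
  | succ n ih =>
    refine hext2 (ModuleCat.of R R) (ModuleCat.of R (Fin (n+1) → R))
      (ModuleCat.of R (Fin n → R)) ?_ hR ih
    refine ⟨LinearMap.single R (fun _ : Fin (n+1) => R) 0,
      LinearMap.funLeft R R Fin.succ, ?_, ?_, ?_⟩
    · intro a b hab
      have := congrFun hab 0
      simpa using this
    · exact LinearMap.funLeft_surjective_of_injective R R _ (Fin.succ_injective n)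
    · apply le_antisymm
      · intro v hv
        rw [LinearMap.mem_ker] at hv
        refine ⟨v 0, ?_⟩
        funext i
        refine Fin.cases ?_ (fun j => ?_) i
        · show Pi.single (M := fun _ : Fin (n+1) => R) 0 (v 0) 0 = v 0
          rw [Pi.single_eq_same]
        · have h0 : v j.succ = 0 := congrFun hv j
          show Pi.single (M := fun _ : Fin (n+1) => R) 0 (v 0) j.succ = v j.succ
          rw [Pi.single_eq_of_ne (Fin.succ_ne_zero j), h0]
      · rintro v ⟨r, rfl⟩
        rw [LinearMap.mem_ker]
        funext j
        show Pi.single (M := fun _ : Fin (n+1) => R) 0 r j.succ = 0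
        rw [Pi.single_eq_of_ne (Fin.succ_ne_zero j)]

end MainAux

/-- Let `X` be a resolving subcategory of `mod R` contained in the
category `G(R)` of totally reflexive modules. If `X` is closed under `R`-duals, then
`X` is closed under cosyzygies, and hence `X` is a thick subcategory of `G(R)`. -/
theorem resolving_dualClosed_isThick
    (R : Type u) [CommRing R] [IsNoetherianRing R] [IsLocalRing R]
    (X : Set (ModuleCat.{u} R)) (hres : IsResolving R X)
    (hsub : X ⊆ {M : ModuleCat.{u} R | TotallyReflexive R ↥M})
    (hdual : ∀ M ∈ X, ModuleCat.of R (Module.Dual R ↥M) ∈ X) :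
    (∀ M ∈ X, ∀ C : ModuleCat.{u} R, IsCosyzygy R ↥M C → C ∈ X) ∧
    IsThickIn R {M : ModuleCat.{u} R | TotallyReflexive R ↥M} X := by
  obtain ⟨hfin, hR, hsum, hext2, hker2⟩ := hres
  have hiso : ∀ {A B : ModuleCat.{u} R}, A ∈ X → (↥B ≃ₗ[R] ↥A) → B ∈ X :=
    fun hA e => mem_of_linearEquiv X hsum hA e
  have hfree : ∀ n : ℕ, ModuleCat.of R (Fin n → R) ∈ X :=
    free_mem X ⟨hfin, hR, hsum, hext2, hker2⟩
  have hcosyz : ∀ M ∈ X, ∀ C : ModuleCat.{u} R, IsCosyzygy R ↥M C → C ∈ X := by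
    rintro M hM C ⟨K, ⟨n, f, hfsurj, -, ⟨eK⟩⟩, ⟨eC⟩⟩
    have hDM : ModuleCat.of R (Module.Dual R ↥M) ∈ X := hdual M hM
    have hkerf : ModuleCat.of R ↥(LinearMap.ker f) ∈ X := by
      refine hker2 (ModuleCat.of R ↥(LinearMap.ker f)) (ModuleCat.of R (Fin n → R))
        (ModuleCat.of R (Module.Dual R ↥M))
        ⟨(LinearMap.ker f).subtype, f, Submodule.injective_subtype _, hfsurj,
          (Submodule.range_subtype _).symm⟩ (hfree n) hDM
    have hK : K ∈ X := hiso hkerf eK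
    exact hiso (hdual K hK) eC
  refine ⟨hcosyz, hsub, hsum, ?_⟩
  rintro L M N hLG hMG hNG ⟨f, g, hf, hg, hker⟩
  refine ⟨?_, fun ⟨hL, hN⟩ => hext2 L M N ⟨f, g, hf, hg, hker⟩ hL hN,
    fun ⟨hM, hN⟩ => hker2 L M N ⟨f, g, hf, hg, hker⟩ hM hN⟩
  rintro ⟨hL, hM⟩
  obtain ⟨-, hNrefl, hNext, -⟩ := hNG
  have hNext1 : Subsingleton (((Ext R (ModuleCat.{u} R) 1).obj (Opposite.op N)).obj
      (ModuleCat.of R R)) := hNext 1 one_pos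
  have hsurj' : ∀ φ : ↥L →ₗ[R] R, ∃ Φ : ↥M →ₗ[R] R, Φ.comp f = φ :=
    fun φ => ext_lift f g hf hg hker hNext1 φ
  -- the dualized short exact sequence
  have hDinj : Function.Injective (g.dualMap : Module.Dual R ↥N →ₗ[R] Module.Dual R ↥M) := by
    intro φ₁ φ₂ h12
    apply LinearMap.ext
    intro nn
    obtain ⟨m, rfl⟩ := hg nn
    exact DFunLike.congr_fun h12 m
  have hDsurj : Function.Surjective (f.dualMap : Module.Dual R ↥M →ₗ[R] Module.Dual R ↥L) := by
    intro φ
    obtain ⟨Φ, hΦ⟩ := hsurj' φ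
    exact ⟨Φ, hΦ⟩
  have hDker : LinearMap.ker (f.dualMap : Module.Dual R ↥M →ₗ[R] Module.Dual R ↥L) =
      LinearMap.range (g.dualMap : Module.Dual R ↥N →ₗ[R] Module.Dual R ↥M) := by
    apply le_antisymm
    · intro φM hφM
      rw [LinearMap.mem_ker] at hφM
      have hle : LinearMap.ker g ≤ LinearMap.ker φM := by
        rw [hker]
        rintro - ⟨l, rfl⟩
        rw [LinearMap.mem_ker]
        exact DFunLike.congr_fun hφM l
      refine ⟨descendAux g φM hg hle, ?_⟩
      apply LinearMap.ext
      intro m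
      exact descendAux_apply g φM hg hle m
    · rintro - ⟨φ, rfl⟩
      rw [LinearMap.mem_ker]
      apply LinearMap.ext
      intro l
      have hgf : g (f l) = 0 := by
        have : f l ∈ LinearMap.range f := ⟨l, rfl⟩
        rw [← hker] at this
        exact this
      show φ (g (f l)) = 0
      rw [hgf, map_zero]
  have hDses : SES R (ModuleCat.of R (Module.Dual R ↥N)) (ModuleCat.of R (Module.Dual R ↥M))
      (ModuleCat.of R (Module.Dual R ↥L)) :=
    ⟨g.dualMap, f.dualMap, hDinj, hDsurj, hDker⟩
  have hDN : ModuleCat.of R (Module.Dual R ↥N) ∈ X :=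
    hker2 _ _ _ hDses (hdual M hM) (hdual L hL)
  have hDDN := hdual _ hDN
  exact hiso hDDN (LinearEquiv.ofBijective (Module.Dual.eval R ↥N) hNrefl)
end
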